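/- Let m ≥ 1 be a natural number and assume a ≠ 0 (so that L ≠ 0). For every real t with sin_λ(2m·t : a) ≠ 0, we have −2m·cot_λ(2m·t : a) = Σ_{j=0}^{2m−1} tan_λ(t + jπ/(2m·L) : a). -/

import Mathlib

open Real


open Polynomial Finset

lemma prod_sub_nthRoots {n : ℕ} (hn : 0 < n) (y : ℂ) :
    ∏ ζ ∈ nthRootsFinset n (1 : ℂ), (y - ζ) = y ^ n - 1 := by
  have hprim := Complex.isPrimitiveRoot_exp n hn.ne'
  have := congrArg (eval y) (X_pow_sub_one_eq_prod hn hprim)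
  simpa [eval_prod] using this.symm

lemma sum_prod_erase_nthRoots {n : ℕ} (hn : 0 < n) (x : ℂ) :
    ∑ ζ ∈ nthRootsFinset n (1 : ℂ), ∏ ξ ∈ (nthRootsFinset n (1 : ℂ)).erase ζ, (x - ξ)
      = n * x ^ (n - 1) := by
  have h1 : HasDerivAt (fun y : ℂ => ∏ ζ ∈ nthRootsFinset n (1 : ℂ), (y - ζ))
      (∑ ζ ∈ nthRootsFinset n (1 : ℂ), (∏ ξ ∈ (nthRootsFinset n (1 : ℂ)).erase ζ, (x - ξ)) • (1 : ℂ)) x :=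
    HasDerivAt.fun_finsetProd fun ζ _ => (hasDerivAt_id x).sub_const ζ
  have h2 : HasDerivAt (fun y : ℂ => ∏ ζ ∈ nthRootsFinset n (1 : ℂ), (y - ζ)) (n * x ^ (n - 1)) x := by
    have : (fun y : ℂ => ∏ ζ ∈ nthRootsFinset n (1 : ℂ), (y - ζ)) = fun y : ℂ => y ^ n - 1 := by
      funext y; exact prod_sub_nthRoots hn y
    rw [this]
    simpa using (hasDerivAt_pow n x).sub_const 1
  have := h1.unique h2
  simpa using this

lemma sum_inv_sub_nthRoots {n : ℕ} (hn : 0 < n) (x : ℂ) (hx : x ^ n ≠ 1) :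
    ∑ ζ ∈ nthRootsFinset n (1 : ℂ), (x - ζ)⁻¹ = n * x ^ (n - 1) / (x ^ n - 1) := by
  have hne : ∀ ζ ∈ nthRootsFinset n (1 : ℂ), x - ζ ≠ 0 := by
    intro ζ hζ h
    rw [mem_nthRootsFinset hn (1 : ℂ)] at hζ
    rw [sub_eq_zero] at h
    exact hx (h ▸ hζ)
  have hprodne : x ^ n - 1 ≠ 0 := sub_ne_zero.mpr hx
  rw [← sum_prod_erase_nthRoots hn x, ← prod_sub_nthRoots hn x, Finset.sum_div]
  refine Finset.sum_congr rfl fun ζ hζ => ?_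
  rw [← Finset.prod_erase_mul _ _ hζ]
  have h1 : x - ζ ≠ 0 := hne ζ hζ
  have h2 : ∏ ξ ∈ (nthRootsFinset n (1 : ℂ)).erase ζ, (x - ξ) ≠ 0 :=
    Finset.prod_ne_zero_iff.mpr fun ξ hξ => hne ξ (Finset.mem_of_mem_erase hξ)
  field_simp

open Complex in
lemma complex_tan_sum {n : ℕ} (hn : 0 < n) (he : Even n) (z : ℂ)
    (hs : Complex.sin (n * z) ≠ 0) :
    ∑ j ∈ Finset.range n,
        Complex.sin (z + j * (Real.pi : ℂ) / n) / Complex.cos (z + j * (Real.pi : ℂ) / n)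
      = -(n * (Complex.cos (n * z) / Complex.sin (n * z))) := by
  have hn' : (n : ℂ) ≠ 0 := Nat.cast_ne_zero.mpr hn.ne'
  have key : ∀ w : ℂ, exp (-(w * I)) * exp (2 * w * I) = exp (w * I) := by
    intro w
    rw [← Complex.exp_add]
    congr 1
    ring
  have sin_eq : ∀ w : ℂ, Complex.sin w = exp (-(w * I)) * (1 - exp (2 * w * I)) * I / 2 := by
    intro w
    rw [Complex.sin, mul_sub, mul_one, key, neg_mul]
  have cos_eq : ∀ w : ℂ, Complex.cos w = exp (-(w * I)) * (1 + exp (2 * w * I)) / 2 := by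
    intro w
    rw [Complex.cos, mul_add, mul_one, key, neg_mul, add_comm]
  set ω : ℂ := exp (2 * Real.pi * I / n) with hω
  have hprim : IsPrimitiveRoot ω n := Complex.isPrimitiveRoot_exp n hn.ne'
  set u : ℂ := exp (2 * z * I) with hu
  have hu0 : u ≠ 0 := Complex.exp_ne_zero _
  have hUn : exp (2 * (n * z) * I) = u ^ n := by
    rw [hu, ← Complex.exp_nat_mul]; congr 1; ring
  have hU1 : u ^ n ≠ 1 := by
    intro h
    apply hs
    rw [sin_eq, hUn, h]
    simp
  have hωn : ω ^ n = 1 := hprim.pow_eq_one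
  have hvj : ∀ j : ℕ, exp (2 * (z + j * (Real.pi : ℂ) / n) * I) = u * ω ^ j := by
    intro j
    rw [hu, hω, ← Complex.exp_nat_mul, ← Complex.exp_add]
    congr 1
    field_simp
  have hne : ∀ j : ℕ, 1 + u * ω ^ j ≠ 0 := by
    intro j h
    apply hU1
    have h1 : u * ω ^ j = -1 := eq_neg_of_add_eq_zero_right h
    have h2 : (ω ^ j) ^ n = 1 := by
      rw [← pow_mul, mul_comm, pow_mul, hωn, one_pow]
    have := congrArg (· ^ n) h1
    simp only [mul_pow] at this
    rwa [h2, mul_one, he.neg_one_pow] at this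
  -- reindexing: the n-th roots are the -ω⁻ʲ
  set η : ℂ := ω⁻¹ with hη
  have hηprim : IsPrimitiveRoot η n := hprim.inv
  have hg : nthRootsFinset n (1 : ℂ) = (Finset.range n).image (fun j => -η ^ j) := by
    symm
    apply Finset.eq_of_subset_of_card_le
    · intro x hx
      simp only [Finset.mem_image, Finset.mem_range] at hx
      obtain ⟨j, _, rfl⟩ := hx
      rw [mem_nthRootsFinset hn (1 : ℂ), he.neg_pow, ← pow_mul, mul_comm j n, pow_mul,
        hηprim.pow_eq_one, one_pow]
    · rw [hprim.card_nthRootsFinset, Finset.card_image_of_injOn, Finset.card_range]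
      intro i hi j hj hij
      simp only [Finset.mem_coe, Finset.mem_range] at hi hj
      exact hηprim.pow_inj hi hj (neg_injective hij)
  have hinj : Set.InjOn (fun j => -η ^ j) (Finset.range n : Set ℕ) := by
    intro i hi j hj hij
    simp only [Finset.mem_coe, Finset.mem_range] at hi hj
    exact hηprim.pow_inj hi hj (neg_injective hij)
  have hT : ∑ j ∈ Finset.range n, (u - (-η ^ j))⁻¹ = n * u ^ (n - 1) / (u ^ n - 1) := by
    rw [← sum_inv_sub_nthRoots hn u hU1, hg, Finset.sum_image hinj]
  have hden2 : ∀ j : ℕ, u - (-η ^ j) ≠ 0 := by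
    intro j h
    apply hU1
    rw [sub_eq_zero] at h
    rw [h, he.neg_pow, ← pow_mul, mul_comm j n, pow_mul, hηprim.pow_eq_one, one_pow]
  have hstep : ∀ j : ℕ, (1 + u * ω ^ j)⁻¹ = 1 - u * (u - (-η ^ j))⁻¹ := by
    intro j
    have hωj : ω ^ j ≠ 0 := pow_ne_zero _ (Complex.exp_ne_zero _)
    have hηω : η ^ j * ω ^ j = 1 := by
      rw [hη, ← mul_pow, inv_mul_cancel₀ (Complex.exp_ne_zero _), one_pow]
    have hden' : u + η ^ j ≠ 0 := by
      have := hden2 j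
      rwa [sub_neg_eq_add] at this
    rw [sub_neg_eq_add]
    field_simp [hne j, hden']
    linear_combination (-u) * hηω
  have hup : u * u ^ (n - 1) = u ^ n := by
    rw [← pow_succ']
    congr 1
    omega
  have hden : u ^ n - 1 ≠ 0 := sub_ne_zero.mpr hU1
  have h1u : (1 : ℂ) - u ^ n ≠ 0 := fun h => hU1 (by linear_combination -h)
  have hS : ∑ j ∈ Finset.range n, (1 + u * ω ^ j)⁻¹ = n / (1 - u ^ n) := by
    simp_rw [hstep]
    rw [Finset.sum_sub_distrib, Finset.sum_const, Finset.card_range, ← Finset.mul_sum, hT]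
    field_simp
    ring_nf
    linear_combination ((n : ℂ) * u ^ n - n) * hup
  have term_eq : ∀ j ∈ Finset.range n,
      Complex.sin (z + j * (Real.pi : ℂ) / n) / Complex.cos (z + j * (Real.pi : ℂ) / n)
        = 2 * I * (1 + u * ω ^ j)⁻¹ - I := by
    intro j _
    rw [sin_eq, cos_eq, hvj j]
    set E : ℂ := exp (-((z + j * (Real.pi : ℂ) / n) * I)) with hE
    have he0 : E ≠ 0 := Complex.exp_ne_zero _
    have h2 : E * (1 + u * ω ^ j) / 2 ≠ 0 :=
      div_ne_zero (mul_ne_zero he0 (hne j)) two_ne_zero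
    rw [div_eq_iff h2]
    field_simp [hne j]
    ring
  rw [Finset.sum_congr rfl term_eq, Finset.sum_sub_distrib, Finset.sum_const,
    Finset.card_range, ← Finset.mul_sum, hS, sin_eq, cos_eq, hUn]
  have he0 : exp (-((n * z) * I)) ≠ 0 := Complex.exp_ne_zero _
  have hsin' : (1 : ℂ) - u ^ n ≠ 0 := h1u
  field_simp
  ring_nf
  linear_combination ((n:ℂ) + (n:ℂ) * u ^ n) * Complex.I_sq

lemma real_tan_sum {n : ℕ} (hn : 0 < n) (he : Even n) (θ : ℝ) (hs : Real.sin (n * θ) ≠ 0) :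
    -(n * (Real.cos (n * θ) / Real.sin (n * θ)))
      = ∑ j ∈ Finset.range n, Real.sin (θ + j * Real.pi / n) / Real.cos (θ + j * Real.pi / n) := by
  have hsC : Complex.sin ((n : ℂ) * (θ : ℂ)) ≠ 0 := by
    rw [show ((n : ℂ) * (θ : ℂ)) = ((n * θ : ℝ) : ℂ) by push_cast; ring, ← Complex.ofReal_sin]
    exact Complex.ofReal_ne_zero.mpr hs
  have h := complex_tan_sum hn he (θ : ℂ) hsC
  apply Complex.ofReal_injective
  push_cast
  rw [← h]


/-- −2m·cot_λ(2m·t : a) = Σ_{j=0}^{2m−1} tan_λ(t + jπ/(2m·L) : a),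
where tan_λ(x:a) = sin(x·L)/cos(x·L) and cot_λ(x:a) = cos(x·L)/sin(x·L). -/
theorem degenerate_cot_multiple_angle_tan (lam a : ℝ) (hlam : lam ≠ 0)
    (ha : 1 + lam * a > 0) (haz : a ≠ 0) (L : ℝ)
    (hL : L = lam⁻¹ * Real.log (1 + lam * a)) (m : ℕ) (hm : 1 ≤ m) (t : ℝ)
    (hs : Real.sin (2 * m * t * L) ≠ 0) :
    -(2 * m * (Real.cos (2 * m * t * L) / Real.sin (2 * m * t * L)))
      = ∑ j ∈ Finset.range (2 * m),
          Real.sin ((t + j * π / (2 * m * L)) * L) / Real.cos ((t + j * π / (2 * m * L)) * L) := by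
  have hLne : L ≠ 0 := by
    rw [hL]
    refine mul_ne_zero (inv_ne_zero hlam) ?_
    intro h
    rcases Real.log_eq_zero.mp h with h1 | h1 | h1
    · linarith
    · have : lam * a = 0 := by linarith
      rcases mul_eq_zero.mp this with h2 | h2 <;> [exact hlam h2; exact haz h2]
    · linarith
  have hn : 0 < 2 * m := by omega
  have he : Even (2 * m) := even_two_mul m
  have hmne : (2 * (m : ℝ)) ≠ 0 := by positivity
  have hang : ∀ j : ℕ, (t + j * π / (2 * m * L)) * L = t * L + j * π / (2 * m : ℕ) := by
    intro j
    push_cast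
    field_simp
  have hs' : Real.sin ((2 * m : ℕ) * (t * L)) ≠ 0 := by
    convert hs using 2
    push_cast
    ring
  have h := real_tan_sum hn he (t * L) hs'
  simp_rw [hang]
  rw [← h]
  push_cast
  ring_nf
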